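/- Let ε ∈ (0, 1/2]. Then 2ε - (2/3)ε³ - 2(1-ε²)^{1/2}·arcsin(ε) ≥ (31/210)·ε⁵. -/

import Mathlib

open Real

lemma aux_x_le_arcsin {x : ℝ} (h0 : 0 ≤ x) (h1 : x ≤ 1 / 2) : x ≤ Real.arcsin x := by
  rw [Real.le_arcsin_iff_sin_le ⟨by nlinarith [Real.pi_gt_three], by nlinarith [Real.pi_gt_three]⟩
    ⟨by linarith, by linarith⟩]
  exact Real.sin_le h0

/-- For `ε ∈ (0, 1/2]`, `2ε - (2/3)ε³ - 2(1-ε²)^{1/2}·arcsin ε ≥ (31/210)·ε⁵`. -/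
theorem arc_chord_area_lower_bound (ε : ℝ) (hε0 : 0 < ε) (hε : ε ≤ 1 / 2) :
    (31 / 210) * ε ^ 5 ≤
      2 * ε - (2 / 3) * ε ^ 3 - 2 * Real.sqrt (1 - ε ^ 2) * Real.arcsin ε := by
  set g : ℝ → ℝ := fun x =>
    2 * x - (2 / 3) * x ^ 3 - (31 / 210) * x ^ 5 - 2 * Real.sqrt (1 - x ^ 2) * Real.arcsin x
    with hg
  have key : ∀ x ∈ Set.Icc (0 : ℝ) (1 / 2), 0 ≤ g x := by
    have hmono : MonotoneOn g (Set.Icc (0 : ℝ) (1 / 2)) := by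
      have hderiv : ∀ x ∈ Set.Ioo (0 : ℝ) (1 / 2),
          HasDerivAt g (-2 * x ^ 2 - (31 / 42) * x ^ 4
            + 2 * x * Real.arcsin x / Real.sqrt (1 - x ^ 2)) x := by
        intro x hx
        obtain ⟨hx0, hx1⟩ := hx
        have hx2 : x ^ 2 < 1 := by nlinarith
        have hs_pos : 0 < Real.sqrt (1 - x ^ 2) := Real.sqrt_pos.2 (by linarith)
        have hsq : Real.sqrt (1 - x ^ 2) ^ 2 = 1 - x ^ 2 :=
          Real.sq_sqrt (by linarith)
        have h1 : HasDerivAt (fun y : ℝ => 1 - y ^ 2) (-(2 * x)) x := by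
          simpa using ((hasDerivAt_pow 2 x).const_sub 1)
        have hsqrt : HasDerivAt (fun y : ℝ => Real.sqrt (1 - y ^ 2))
            (-(2 * x) / (2 * Real.sqrt (1 - x ^ 2))) x :=
          (Real.hasDerivAt_sqrt (by nlinarith)).comp x h1 |>.congr_deriv (by ring)
        have harcsin : HasDerivAt Real.arcsin (1 / Real.sqrt (1 - x ^ 2)) x :=
          Real.hasDerivAt_arcsin (by linarith) (by linarith)
        have hprod := (hsqrt.const_mul 2).mul harcsin
        have hpoly : HasDerivAt (fun y : ℝ => 2 * y - (2 / 3) * y ^ 3 - (31 / 210) * y ^ 5)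
            (2 - 2 * x ^ 2 - (31 / 42) * x ^ 4) x := by
          have := (((hasDerivAt_id x).const_mul 2).sub
            ((hasDerivAt_pow 3 x).const_mul (2/3))).sub ((hasDerivAt_pow 5 x).const_mul (31/210))
          refine this.congr_deriv ?_
          ring
        have := hpoly.sub hprod
        refine this.congr_deriv ?_
        have hs_ne : Real.sqrt (1 - x ^ 2) ≠ 0 := ne_of_gt hs_pos
        field_simp
        ring
      apply monotoneOn_of_deriv_nonneg (convex_Icc 0 (1/2))
      · apply ContinuousOn.sub
        · fun_prop
        · apply ContinuousOn.mul
          · apply ContinuousOn.mul continuousOn_const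
            exact (Real.continuous_sqrt.comp (by continuity)).continuousOn
          · exact Real.continuous_arcsin.continuousOn
      · intro x hx
        rw [interior_Icc] at hx
        exact (hderiv x hx).differentiableAt.differentiableWithinAt
      · intro x hx
        rw [interior_Icc] at hx
        rw [(hderiv x hx).deriv]
        obtain ⟨hx0, hx1⟩ := hx
        have hx2 : x ^ 2 < 1 := by nlinarith
        have hs_pos : 0 < Real.sqrt (1 - x ^ 2) := Real.sqrt_pos.2 (by linarith)
        have hsq : Real.sqrt (1 - x ^ 2) ^ 2 = 1 - x ^ 2 := Real.sq_sqrt (by linarith)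
        have harc : x ≤ Real.arcsin x := aux_x_le_arcsin hx0.le hx1.le
        have h2 : (2 * x ^ 2 + 31 / 42 * x ^ 4) * Real.sqrt (1 - x ^ 2) ≤ 2 * x * Real.arcsin x := by
          have h2a : (2 + 31 / 42 * x ^ 2) * Real.sqrt (1 - x ^ 2) ≤ 2 := by
            nlinarith [hsq, hs_pos, sq_nonneg x, sq_nonneg (x^2), sq_nonneg (x^3),
              sq_nonneg ((2 + 31/42 * x^2) * Real.sqrt (1 - x^2) - 2)]
          have hstep : (2 * x ^ 2 + 31 / 42 * x ^ 4) * Real.sqrt (1 - x ^ 2) ≤ 2 * x ^ 2 := by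
            nlinarith [h2a, sq_nonneg x, hs_pos]
          nlinarith [harc, hx0]
        have h3 : 2 * x ^ 2 + 31 / 42 * x ^ 4 ≤ 2 * x * Real.arcsin x / Real.sqrt (1 - x ^ 2) := by
          rw [le_div_iff₀ hs_pos]; exact h2
        linarith
    intro x hx
    have h0 : g 0 = 0 := by simp [hg]
    have := hmono (Set.left_mem_Icc.2 (by norm_num)) hx hx.1
    linarith [this, h0.symm.le]
  have := key ε ⟨hε0.le, hε⟩
  simp only [hg] at this
  linarith
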